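/- For every w ∈ (0,1): ∫_0^1 ∫_0^1 ∫_0^1 e^{x y w} · (1−w)·y·(1−x)·z·(1−z) dz dy dx = 1/6 − 1/(6w) + ( 1/(6w) − 1/(6w²) ) · ∫_0^w (1 − e^{τ})/τ dτ. -/

import Mathlib

open MeasureTheory intervalIntegral

private noncomputable def kAux (τ : ℝ) : ℝ := (Real.exp τ - 1 - τ) / τ

private lemma phi_intble {w : ℝ} (hw0 : 0 < w) (hw1 : w < 1) :
    IntervalIntegrable (fun τ : ℝ => (1 - Real.exp τ) / τ) volume 0 w := by
  rw [intervalIntegrable_iff_integrableOn_Ioc_of_le hw0.le]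
  refine Integrable.mono' (g := fun _ => Real.exp 1)
    (integrableOn_const (s := Set.Ioc 0 w) (μ := volume) (C := Real.exp 1) (hs := measure_Ioc_lt_top.ne))
    (((measurable_const.sub Real.measurable_exp).div measurable_id).aestronglyMeasurable) ?_
  rw [ae_restrict_iff' measurableSet_Ioc]
  filter_upwards with τ hτ
  obtain ⟨h0, h1⟩ := hτ
  have he1 : 1 ≤ Real.exp τ := Real.one_le_exp h0.le
  have hb : Real.exp τ - 1 ≤ τ * Real.exp τ := by
    have h2 : 1 - τ ≤ Real.exp (-τ) := by linarith [Real.add_one_le_exp (-τ)]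
    have h3 : Real.exp (-τ) * Real.exp τ = 1 := by
      rw [← Real.exp_add]; simp
    nlinarith [Real.exp_pos τ]
  have hτe : Real.exp τ ≤ Real.exp 1 := Real.exp_le_exp.2 (h1.trans hw1.le)
  rw [Real.norm_eq_abs, abs_div, abs_of_nonpos (by linarith), abs_of_pos h0, div_le_iff₀ h0]
  nlinarith

/-- The `ε⁰`-coefficient `I(0,w)` of the triple integral, in terms of the iterated integral
`G((1-e^τ)/τ; w)`, as computed by cmAZExpandedDirectIntegrate. -/
theorem triple_integral_epsilon_zero_coefficient :
    ∀ w ∈ Set.Ioo (0 : ℝ) 1,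
      (∫ x in (0 : ℝ)..1, ∫ y in (0 : ℝ)..1, ∫ z in (0 : ℝ)..1,
          Real.exp (x * y * w) * ((1 - w) * y * (1 - x) * z * (1 - z)))
        = 1 / 6 - 1 / (6 * w)
          + (1 / (6 * w) - 1 / (6 * w ^ 2)) * ∫ τ in (0 : ℝ)..w, (1 - Real.exp τ) / τ := by
  rintro w ⟨hw0, hw1⟩
  have hwne : w ≠ 0 := ne_of_gt hw0
  set G := ∫ τ in (0:ℝ)..w, (1 - Real.exp τ) / τ with hG
  -- Step 1: the inner z-integral
  have hz : ∀ x y : ℝ, (∫ z in (0:ℝ)..1,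
      Real.exp (x * y * w) * ((1 - w) * y * (1 - x) * z * (1 - z)))
      = Real.exp (x * y * w) * ((1 - w) * y * (1 - x)) * (6⁻¹ : ℝ) := by
    intro x y
    have h1 : ∀ z : ℝ, Real.exp (x * y * w) * ((1 - w) * y * (1 - x) * z * (1 - z))
        = (Real.exp (x * y * w) * ((1 - w) * y * (1 - x))) * (z - z ^ 2) := by
      intro z; ring
    simp_rw [h1]
    rw [intervalIntegral.integral_const_mul]
    have hsplit := intervalIntegral.integral_sub (μ := volume) (a := (0:ℝ)) (b := (1:ℝ))
      (f := fun z : ℝ => z) (g := fun z : ℝ => z ^ 2)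
      (continuous_id'.intervalIntegrable 0 1) ((continuous_pow 2).intervalIntegrable 0 1)
    rw [hsplit, integral_id, integral_pow]
    norm_num
  simp_rw [hz]
  -- Step 2: swap the order of integration (Fubini)
  have hcont : Continuous (Function.uncurry fun x y : ℝ =>
      Real.exp (x * y * w) * ((1 - w) * y * (1 - x)) * (6⁻¹:ℝ)) := by
    fun_prop
  have hswap : (∫ x in (0:ℝ)..1, ∫ y in (0:ℝ)..1,
        Real.exp (x * y * w) * ((1 - w) * y * (1 - x)) * (6⁻¹:ℝ))
      = ∫ y in (0:ℝ)..1, ∫ x in (0:ℝ)..1,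
        Real.exp (x * y * w) * ((1 - w) * y * (1 - x)) * (6⁻¹:ℝ) := by
    simp_rw [intervalIntegral.integral_of_le (zero_le_one' ℝ)]
    apply MeasureTheory.integral_integral_swap
    rw [Measure.prod_restrict, ← Measure.volume_eq_prod]
    apply (hcont.continuousOn.integrableOn_compact (isCompact_Icc.prod isCompact_Icc)).mono_set
    exact Set.prod_mono Set.Ioc_subset_Icc_self Set.Ioc_subset_Icc_self
  rw [hswap]
  -- Step 3: the inner x-integral via FTC
  have hx : ∀ y : ℝ, y ≠ 0 →
      (∫ x in (0:ℝ)..1, Real.exp (x * y * w) * ((1 - w) * y * (1 - x)) * (6⁻¹:ℝ))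
      = (1 - w) / (6 * w) * kAux (y * w) := by
    intro y hy
    set b := y * w with hb
    have hbne : b ≠ 0 := mul_ne_zero hy hwne
    have hderiv : ∀ x ∈ Set.uIcc (0:ℝ) 1,
        HasDerivAt (fun x => (1 - w) * y * 6⁻¹ * (Real.exp (b * x) * ((1 - x) / b + 1 / b ^ 2)))
          (Real.exp (x * y * w) * ((1 - w) * y * (1 - x)) * 6⁻¹) x := by
      intro x _
      have h1 : HasDerivAt (fun x : ℝ => Real.exp (b * x)) (Real.exp (b * x) * (b * 1)) x :=
        ((hasDerivAt_id x).const_mul b).exp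
      have h2 : HasDerivAt (fun x : ℝ => (1 - x) / b + 1 / b ^ 2) (-1 / b) x := by
        have hlin : HasDerivAt (fun x : ℝ => (1 : ℝ) - x) (-1) x := by
          simpa using (hasDerivAt_id x).const_sub 1
        exact (hlin.div_const b).add_const (1 / b ^ 2)
      have h3 := (h1.mul h2).const_mul ((1 - w) * y * 6⁻¹)
      refine h3.congr_deriv ?_
      have hexp : Real.exp (x * y * w) = Real.exp (b * x) := by
        rw [hb]; ring_nf
      rw [hexp]
      field_simp
      ring
    rw [intervalIntegral.integral_eq_sub_of_hasDerivAt hderiv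
      (Continuous.intervalIntegrable (by fun_prop) 0 1)]
    simp only [mul_one, mul_zero, Real.exp_zero, kAux]
    field_simp
    ring
  -- Step 4: rewrite the outer integrand (a.e. on (0,1])
  have hcongr : (∫ y in (0:ℝ)..1, ∫ x in (0:ℝ)..1,
        Real.exp (x * y * w) * ((1 - w) * y * (1 - x)) * (6⁻¹:ℝ))
      = ∫ y in (0:ℝ)..1, (1 - w) / (6 * w) * kAux (y * w) := by
    apply intervalIntegral.integral_congr_ae
    filter_upwards with y hy
    rw [Set.uIoc_of_le (zero_le_one' ℝ)] at hy
    exact hx y (ne_of_gt hy.1)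
  rw [hcongr]
  -- Step 5: substitution τ = y * w
  have hsub : (∫ y in (0:ℝ)..1, (1 - w) / (6 * w) * kAux (y * w))
      = (1 - w) / (6 * w) * (w⁻¹ * ∫ τ in (0:ℝ)..w, kAux τ) := by
    rw [intervalIntegral.integral_const_mul, intervalIntegral.integral_comp_mul_right kAux hwne]
    simp only [zero_mul, one_mul, smul_eq_mul]
  rw [hsub]
  -- Step 6: relate ∫ kAux to G
  have hkint : (∫ τ in (0:ℝ)..w, kAux τ) = -w - G := by
    have hφ := phi_intble hw0 hw1
    have h1 : (∫ τ in (0:ℝ)..w, kAux τ)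
        = ∫ τ in (0:ℝ)..w, (-((1 - Real.exp τ) / τ) - 1) := by
      apply intervalIntegral.integral_congr_ae
      filter_upwards with τ hτ
      rw [Set.uIoc_of_le hw0.le] at hτ
      have hτ0 : τ ≠ 0 := ne_of_gt hτ.1
      simp only [kAux]
      field_simp
      ring
    rw [h1, intervalIntegral.integral_sub
      (show IntervalIntegrable (fun τ => -((1 - Real.exp τ) / τ)) volume 0 w from hφ.neg)
      intervalIntegrable_const,
      intervalIntegral.integral_neg, intervalIntegral.integral_const]
    rw [← hG]
    simp only [smul_eq_mul, mul_one, sub_zero]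
    ring
  rw [hkint]
  field_simp
  ring
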